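/- Let k ∈ (0,1), b ∈ ℕ, K > 0, and let θ : ℕ → ℝ satisfy |θ(l+1) - θ(l) - k| ≤ (K/sin(πk))·1/(l-b) for all l > b. Then there exists a constant C (depending only on k and K) such that for all n > n₀ > b, |∑_{l=n₀}^{n} e^{2πi·θ(l)}/(l-b)| ≤ C/(n₀-b). -/

import Mathlib

open Complex Finset

private lemma osc_exp_I_sub_one_le (t : ℝ) :
    ‖Complex.exp ((t : ℂ) * Complex.I) - 1‖ ≤ |t| := by
  have hsq : ‖Complex.exp ((t : ℂ) * Complex.I) - 1‖ ^ 2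
      = 2 - 2 * Real.cos t := by
    rw [Complex.sq_norm]
    have h1 : Complex.exp ((t : ℂ) * Complex.I) - 1
        = ((Real.cos t - 1 : ℝ) : ℂ) + (Real.sin t : ℝ) * Complex.I := by
      rw [Complex.exp_mul_I, ← Complex.ofReal_cos, ← Complex.ofReal_sin]
      push_cast
      ring
    rw [h1, Complex.normSq_add_mul_I]
    nlinarith [Real.sin_sq_add_cos_sq t]
  have hc := Real.one_sub_sq_div_two_le_cos (x := t)
  nlinarith [norm_nonneg (Complex.exp ((t : ℂ) * Complex.I) - 1),
    abs_nonneg t, _root_.sq_abs t]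

private lemma osc_tele_sum (g : ℕ → ℝ) (m : ℕ) : ∀ n, m ≤ n →
    ∑ l ∈ Finset.Icc (m + 1) n, (g (l - 1) - g l) = g m - g n := by
  intro n
  induction n with
  | zero => intro h; interval_cases m; simp
  | succ n ih =>
    intro h
    rcases Nat.lt_or_ge m (n + 1) with h1 | h1
    · have hm : m ≤ n := Nat.lt_succ_iff.mp h1
      rw [← Finset.insert_Icc_right_eq_Icc_add_one (by omega), Finset.sum_insert (by simp), ih hm]
      simp only [Nat.add_sub_cancel]
      ring
    · have : m = n + 1 := le_antisymm h h1
      subst this; simp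

private lemma osc_abel_sum (a w : ℕ → ℂ) (m : ℕ) : ∀ n, m ≤ n →
    ∑ l ∈ Finset.Icc m n, (a (l + 1) - a l) * w l
      = a (n + 1) * w n - a m * w m
        + ∑ l ∈ Finset.Icc (m + 1) n, a l * (w (l - 1) - w l) := by
  intro n
  induction n with
  | zero => intro h; interval_cases m; simp; ring
  | succ n ih =>
    intro h
    rcases Nat.lt_or_ge m (n + 1) with h1 | h1
    · have hm : m ≤ n := Nat.lt_succ_iff.mp h1
      rw [← Finset.insert_Icc_right_eq_Icc_add_one (show m ≤ n + 1 by omega),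
        Finset.sum_insert (by simp),
        ← Finset.insert_Icc_right_eq_Icc_add_one (show m + 1 ≤ n + 1 by omega),
        Finset.sum_insert (by simp), ih hm]
      simp only [Nat.add_sub_cancel]
      ring
    · have : m = n + 1 := le_antisymm h h1
      subst this; simp; ring

/-- Abstract oscillatory sum estimate: if `θ(l)` advances by approximately `k ∈ (0,1)`
per step, with error at most `(K/sin(πk))·1/(l-b)`, then the weighted sums
`∑_{l=n₀}^{n} e^{2πiθ(l)}/(l-b)` are bounded by `C(k,K)/(n₀-b)`. -/
theorem abstract_oscillatory_sum (k : ℝ) (hk : k ∈ Set.Ioo (0 : ℝ) 1)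
    (b : ℕ) (K : ℝ) (hK : 0 < K) :
    ∃ C : ℝ, 0 < C ∧ ∀ θ : ℕ → ℝ,
      (∀ l : ℕ, b < l →
        |θ (l + 1) - θ l - k| ≤ K / Real.sin (Real.pi * k) * (1 / ((l : ℝ) - (b : ℝ)))) →
      ∀ n₀ n : ℕ, b < n₀ → n₀ < n →
        ‖∑ l ∈ Finset.Icc n₀ n,
            Complex.exp (2 * (Real.pi : ℂ) * Complex.I * ((θ l : ℝ) : ℂ))
              / ((((l : ℝ) - (b : ℝ)) : ℝ) : ℂ)‖
          ≤ C / ((n₀ : ℝ) - (b : ℝ)) := by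
  obtain ⟨hk0, hk1⟩ := hk
  have hπ := Real.pi_pos
  have hsin : 0 < Real.sin (Real.pi * k) :=
    Real.sin_pos_of_pos_of_lt_pi (by positivity) (by nlinarith)
  set K' := K / Real.sin (Real.pi * k) with hK'def
  have hK'pos : 0 < K' := div_pos hK hsin
  set E : ℂ := Complex.exp (2 * (Real.pi : ℂ) * Complex.I * (k : ℂ)) with hEdef
  have hE1 : E ≠ 1 := by
    rw [hEdef, Ne, Complex.exp_eq_one_iff]
    rintro ⟨m, hm⟩
    have h2 : (2 * (Real.pi : ℂ) * Complex.I) ≠ 0 := by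
      simp [Real.pi_ne_zero, Complex.I_ne_zero]
    have hkm : (k : ℂ) = (m : ℂ) := by
      apply mul_left_cancel₀ h2
      linear_combination hm
    have hkm' : k = (m : ℝ) := by exact_mod_cast hkm
    have h0 : (0 : ℤ) < m := by exact_mod_cast hkm' ▸ hk0
    have h1 : m < (1 : ℤ) := by exact_mod_cast hkm' ▸ hk1
    omega
  set d := ‖E - 1‖ with hddef
  have hdpos : 0 < d := by
    rw [hddef]
    simpa [sub_eq_zero] using hE1
  refine ⟨(3 + 4 * Real.pi * K') / d, by positivity, ?_⟩
  intro θ hθ n₀ n hbn₀ hn₀n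
  -- abbreviations
  set a : ℕ → ℂ := fun l => Complex.exp (2 * (Real.pi : ℂ) * Complex.I * ((θ l : ℝ) : ℂ))
    with hadef
  set w : ℕ → ℝ := fun l => 1 / ((l : ℝ) - (b : ℝ)) with hwdef
  have hwpos : ∀ l : ℕ, b < l → 0 < w l := by
    intro l hl
    have : (b : ℝ) < (l : ℝ) := by exact_mod_cast hl
    simp only [hwdef]
    exact div_pos one_pos (by linarith)
  have habs : ∀ l, ‖a l‖ = 1 := by
    intro l
    have : a l = Complex.exp (((2 * Real.pi * θ l : ℝ) : ℂ) * Complex.I) := by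
      simp only [hadef]; push_cast; ring_nf
    rw [this, Complex.norm_exp_ofReal_mul_I]
  have hwfact : ∀ l : ℕ, b + 2 ≤ l → w l ≤ w (l - 1) ∧ w l ^ 2 ≤ w (l - 1) - w l := by
    intro l hl
    have hc : ((l - 1 : ℕ) : ℝ) = (l : ℝ) - 1 := by
      rw [Nat.cast_sub (by omega : 1 ≤ l), Nat.cast_one]
    have hx : (b : ℝ) + 2 ≤ (l : ℝ) := by exact_mod_cast hl
    have h0 : (0 : ℝ) < (l : ℝ) - 1 - (b : ℝ) := by linarith
    have h1 : (0 : ℝ) < (l : ℝ) - (b : ℝ) := by linarith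
    simp only [hwdef, hc]
    constructor
    · rw [sub_sub] at h0 ⊢
      exact one_div_le_one_div_of_le h0 (by linarith)
    · rw [div_pow, one_pow, sub_sub,
        div_sub_div _ _ (by rw [← sub_sub]; exact ne_of_gt h0) (ne_of_gt h1),
        div_le_div_iff₀ (by positivity) (by rw [← sub_sub] at *; exact mul_pos h0 h1)]
      nlinarith
  -- the remainder terms
  set r : ℕ → ℂ := fun l => a (l + 1) - a l * E with hrdef
  have hrbound : ∀ l : ℕ, b < l → ‖r l‖ ≤ 2 * Real.pi * K' * w l := by
    intro l hl
    have hsplit : a (l + 1) = a l * E *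
        Complex.exp (((2 * Real.pi * (θ (l + 1) - θ l - k) : ℝ) : ℂ) * Complex.I) := by
      simp only [hadef, hEdef, ← Complex.exp_add]
      congr 1
      push_cast
      ring
    have : r l = a l * E *
        (Complex.exp (((2 * Real.pi * (θ (l + 1) - θ l - k) : ℝ) : ℂ) * Complex.I) - 1) := by
      rw [hrdef]; simp only []
      rw [hsplit]; ring
    rw [this]
    rw [norm_mul, norm_mul, habs]
    have hEabs : ‖E‖ = 1 := by
      have : E = Complex.exp (((2 * Real.pi * k : ℝ) : ℂ) * Complex.I) := by
        rw [hEdef]; congr 1; push_cast; ring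
      rw [this, Complex.norm_exp_ofReal_mul_I]
    rw [hEabs, one_mul, one_mul]
    calc ‖Complex.exp (((2 * Real.pi * (θ (l + 1) - θ l - k) : ℝ) : ℂ)
          * Complex.I) - 1‖
        ≤ |2 * Real.pi * (θ (l + 1) - θ l - k)| := osc_exp_I_sub_one_le _
      _ = 2 * Real.pi * |θ (l + 1) - θ l - k| := by
          rw [abs_mul, abs_of_pos (by positivity : (0:ℝ) < 2 * Real.pi)]
      _ ≤ 2 * Real.pi * (K' * w l) := by
          have := hθ l hl
          have h2 : |θ (l + 1) - θ l - k| ≤ K' * w l := by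
            simpa [hK'def, hwdef, mul_one_div] using this
          nlinarith
      _ = 2 * Real.pi * K' * w l := by ring
  -- rewrite the sum
  have hTrw : ∑ l ∈ Finset.Icc n₀ n,
      Complex.exp (2 * (Real.pi : ℂ) * Complex.I * ((θ l : ℝ) : ℂ))
        / ((((l : ℝ) - (b : ℝ)) : ℝ) : ℂ)
      = (E - 1)⁻¹ * ∑ l ∈ Finset.Icc n₀ n,
          ((a (l + 1) - a l) * (w l : ℂ) - r l * (w l : ℂ)) := by
    rw [Finset.mul_sum]
    apply Finset.sum_congr rfl
    intro l _
    have hE1' : E - 1 ≠ 0 := sub_ne_zero.mpr hE1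
    calc Complex.exp (2 * (Real.pi : ℂ) * Complex.I * ((θ l : ℝ) : ℂ))
          / ((((l : ℝ) - (b : ℝ)) : ℝ) : ℂ)
        = a l * (w l : ℂ) := by
          simp only [hadef, hwdef]
          push_cast
          rw [div_eq_mul_inv, one_div]
      _ = (E - 1)⁻¹ * ((a (l + 1) - a l) * (w l : ℂ) - r l * (w l : ℂ)) := by
          rw [inv_mul_eq_div, eq_div_iff hE1']
          simp only [hrdef]
          ring
  rw [hTrw, norm_mul]
  have hn₀n' : n₀ ≤ n := le_of_lt hn₀n
  -- bound the first partial sum via Abel summation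
  have hS1 : ‖∑ l ∈ Finset.Icc n₀ n, (a (l + 1) - a l) * (w l : ℂ)‖
      ≤ 3 * w n₀ := by
    rw [osc_abel_sum a (fun l => (w l : ℂ)) n₀ n hn₀n']
    have hb1 : ‖a (n + 1) * (w n : ℂ)‖ = w n := by
      rw [norm_mul, habs, one_mul, Complex.norm_real, Real.norm_eq_abs,
        abs_of_pos (hwpos n (lt_trans hbn₀ hn₀n))]
    have hb2 : ‖a n₀ * (w n₀ : ℂ)‖ = w n₀ := by
      rw [norm_mul, habs, one_mul, Complex.norm_real, Real.norm_eq_abs, abs_of_pos (hwpos n₀ hbn₀)]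
    have hb3 : ‖∑ l ∈ Finset.Icc (n₀ + 1) n,
        a l * ((w (l - 1) : ℂ) - (w l : ℂ))‖ ≤ w n₀ - w n := by
      calc ‖∑ l ∈ Finset.Icc (n₀ + 1) n, a l * ((w (l - 1) : ℂ) - (w l : ℂ))‖
          ≤ ∑ l ∈ Finset.Icc (n₀ + 1) n,
            ‖a l * ((w (l - 1) : ℂ) - (w l : ℂ))‖ :=
            norm_sum_le _ _
        _ ≤ ∑ l ∈ Finset.Icc (n₀ + 1) n, (w (l - 1) - w l) := by
            apply Finset.sum_le_sum
            intro l hl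
            rw [Finset.mem_Icc] at hl
            have hmono : w l ≤ w (l - 1) := (hwfact l (by omega)).1
            rw [norm_mul, habs, one_mul, ← Complex.ofReal_sub, Complex.norm_real, Real.norm_eq_abs]
            exact le_of_eq (_root_.abs_of_nonneg (by linarith))
        _ = w n₀ - w n := osc_tele_sum w n₀ n hn₀n'
    calc ‖a (n + 1) * (w n : ℂ) - a n₀ * (w n₀ : ℂ)
          + ∑ l ∈ Finset.Icc (n₀ + 1) n, a l * ((w (l - 1) : ℂ) - (w l : ℂ))‖
        ≤ ‖a (n + 1) * (w n : ℂ) - a n₀ * (w n₀ : ℂ)‖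
          + ‖∑ l ∈ Finset.Icc (n₀ + 1) n,
            a l * ((w (l - 1) : ℂ) - (w l : ℂ))‖ := norm_add_le _ _
      _ ≤ (‖a (n + 1) * (w n : ℂ)‖ + ‖a n₀ * (w n₀ : ℂ)‖)
          + (w n₀ - w n) :=
          add_le_add (norm_sub_le _ _) hb3
      _ = (w n + w n₀) + (w n₀ - w n) := by rw [hb1, hb2]
      _ ≤ 3 * w n₀ := by
          have h := hwpos n (lt_trans hbn₀ hn₀n)
          have h' := hwpos n₀ hbn₀
          linarith
  -- bound the second sum
  have hwle : ∀ l : ℕ, n₀ + 1 ≤ l → l ≤ n → w l ^ 2 ≤ w (l - 1) - w l := by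
    intro l hl1 _
    exact (hwfact l (by omega)).2
  have hS2 : ‖∑ l ∈ Finset.Icc n₀ n, r l * (w l : ℂ)‖
      ≤ 4 * Real.pi * K' * w n₀ := by
    have hw0 : 0 < w n₀ := hwpos n₀ hbn₀
    have hwle1 : w n₀ ≤ 1 := by
      simp only [hwdef]
      rw [div_le_one (by
        have : (b : ℝ) < (n₀ : ℝ) := by exact_mod_cast hbn₀
        linarith)]
      have : (b : ℝ) + 1 ≤ (n₀ : ℝ) := by exact_mod_cast hbn₀
      linarith
    calc ‖∑ l ∈ Finset.Icc n₀ n, r l * (w l : ℂ)‖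
        ≤ ∑ l ∈ Finset.Icc n₀ n, ‖r l * (w l : ℂ)‖ :=
          norm_sum_le _ _
      _ ≤ ∑ l ∈ Finset.Icc n₀ n, 2 * Real.pi * K' * w l ^ 2 := by
          apply Finset.sum_le_sum
          intro l hl
          rw [Finset.mem_Icc] at hl
          have hbl : b < l := lt_of_lt_of_le hbn₀ hl.1
          rw [norm_mul, Complex.norm_real, Real.norm_eq_abs, abs_of_pos (hwpos l hbl)]
          have := hrbound l hbl
          have hwl := hwpos l hbl
          nlinarith
      _ = 2 * Real.pi * K' * ∑ l ∈ Finset.Icc n₀ n, w l ^ 2 := by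
          rw [Finset.mul_sum]
      _ ≤ 2 * Real.pi * K' * (2 * w n₀) := by
          have hsum : ∑ l ∈ Finset.Icc n₀ n, w l ^ 2 ≤ 2 * w n₀ := by
            rw [← Finset.insert_Icc_add_one_left_eq_Icc hn₀n', Finset.sum_insert (by simp)]
            have h1 : ∑ l ∈ Finset.Icc (n₀ + 1) n, w l ^ 2
                ≤ ∑ l ∈ Finset.Icc (n₀ + 1) n, (w (l - 1) - w l) := by
              apply Finset.sum_le_sum
              intro l hl
              rw [Finset.mem_Icc] at hl
              exact hwle l hl.1 hl.2
            rw [osc_tele_sum w n₀ n hn₀n'] at h1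
            have hwn : 0 < w n := hwpos n (lt_trans hbn₀ hn₀n)
            nlinarith [mul_le_mul_of_nonneg_left hwle1 (le_of_lt hw0)]
          exact mul_le_mul_of_nonneg_left hsum (by positivity)
      _ = 4 * Real.pi * K' * w n₀ := by ring
  -- put everything together
  have hfinal : ‖∑ l ∈ Finset.Icc n₀ n,
      ((a (l + 1) - a l) * (w l : ℂ) - r l * (w l : ℂ))‖
      ≤ (3 + 4 * Real.pi * K') * w n₀ := by
    calc ‖∑ l ∈ Finset.Icc n₀ n,
        ((a (l + 1) - a l) * (w l : ℂ) - r l * (w l : ℂ))‖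
        = ‖(∑ l ∈ Finset.Icc n₀ n, (a (l + 1) - a l) * (w l : ℂ))
          - ∑ l ∈ Finset.Icc n₀ n, r l * (w l : ℂ)‖ := by rw [Finset.sum_sub_distrib]
      _ ≤ ‖∑ l ∈ Finset.Icc n₀ n, (a (l + 1) - a l) * (w l : ℂ)‖
          + ‖∑ l ∈ Finset.Icc n₀ n, r l * (w l : ℂ)‖ :=
          norm_sub_le _ _
      _ ≤ 3 * w n₀ + 4 * Real.pi * K' * w n₀ := add_le_add hS1 hS2
      _ = (3 + 4 * Real.pi * K') * w n₀ := by ring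
  have habsinv : ‖(E - 1)⁻¹‖ = 1 / d := by
    rw [norm_inv, ← hddef, one_div]
  rw [habsinv]
  have hwn₀ : w n₀ = 1 / ((n₀ : ℝ) - (b : ℝ)) := rfl
  have hgoal : (1 / d) * ((3 + 4 * Real.pi * K') * w n₀)
      = (3 + 4 * Real.pi * K') / d / ((n₀ : ℝ) - (b : ℝ)) := by
    rw [hwn₀]; field_simp
  calc (1 / d) * ‖∑ l ∈ Finset.Icc n₀ n,
      ((a (l + 1) - a l) * (w l : ℂ) - r l * (w l : ℂ))‖
      ≤ (1 / d) * ((3 + 4 * Real.pi * K') * w n₀) := by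
        apply mul_le_mul_of_nonneg_left hfinal
        positivity
    _ = (3 + 4 * Real.pi * K') / d / ((n₀ : ℝ) - (b : ℝ)) := hgoal
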